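/- For any word w over an alphabet and any n ≥ 1 and k ≥ 1, the word a^(n+k) b a^n b (over the alphabet {a,b}) is primitive, i.e., it is not a proper power u^m with m ≥ 2. -/

import Mathlib

/-- The two-letter alphabet {a, b}. -/
inductive AB : Type
  | a : AB
  | b : AB

deriving instance DecidableEq for AB

/-- The `m`-th power of a word `u` (concatenation of `m` copies of `u`). -/
def wpow {α : Type*} (u : List α) (m : ℕ) : List α := (List.replicate m u).flatten

/-- A word is primitive if `w = u^m` implies `m = 1`. -/
def Primitive {α : Type*} (w : List α) : Prop :=
  ∀ (u : List α) (m : ℕ), w = wpow u m → m = 1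

lemma aux_firstb (p : ℕ) : ∀ q (t s : List AB),
    List.replicate p AB.a ++ AB.b :: t = List.replicate q AB.a ++ AB.b :: s → p = q ∧ t = s := by
  induction p with
  | zero =>
    intro q t s h
    cases q with
    | zero => simpa using h
    | succ q => simp [List.replicate_succ] at h
  | succ p ih =>
    intro q t s h
    cases q with
    | zero => simp [List.replicate_succ] at h
    | succ q =>
      simp only [List.replicate_succ, List.cons_append, List.cons.injEq, true_and] at h
      obtain ⟨h1, h2⟩ := ih q t s h
      exact ⟨by omega, h2⟩

/-- For any n ≥ 1 and k ≥ 1, the word a^(n+k) b a^n b is primitive. -/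
theorem stmt_0 (n k : ℕ) (hn : 1 ≤ n) (hk : 1 ≤ k) :
    Primitive (List.replicate (n + k) AB.a ++ [AB.b] ++ List.replicate n AB.a ++ [AB.b]) := by
  intro u m h
  by_contra hm
  -- count of b's
  have hcw : (List.replicate (n + k) AB.a ++ [AB.b] ++ List.replicate n AB.a ++ [AB.b]).count AB.b = 2 := by
    simp [List.count_append, List.count_replicate]
  have hcp : (wpow u m).count AB.b = m * u.count AB.b := by
    simp [wpow, List.count_flatten, List.map_replicate, List.sum_replicate, smul_eq_mul]
  rw [h] at hcw
  rw [hcp] at hcw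
  -- m = 0 impossible
  rcases Nat.eq_zero_or_pos m with hm0 | hmpos
  · subst hm0
    simp [wpow] at h
  have hm2 : m = 2 := by
    have hle : m ≤ 2 := Nat.le_of_dvd (by norm_num) ⟨_, hcw.symm⟩
    interval_cases m <;> omega
  subst hm2
  have hc1 : u.count AB.b = 1 := by omega
  have h2 : wpow u 2 = u ++ u := by simp [wpow, List.replicate_succ]
  rw [h2] at h
  -- b ∈ u
  have hmem : AB.b ∈ u := by
    rw [← List.count_pos_iff]
    omega
  obtain ⟨v, s, huv⟩ := List.append_of_mem hmem
  subst huv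
  have hvs : v.count AB.b = 0 ∧ s.count AB.b = 0 := by
    simp [List.count_append, List.count_cons] at hc1
    omega
  have hv : v = List.replicate v.length AB.a := by
    rw [List.eq_replicate_iff]
    refine ⟨rfl, fun x hx => ?_⟩
    cases x
    · rfl
    · exact absurd (List.count_eq_zero.mp hvs.1 hx) (fun h => h)
  have hs : s = List.replicate s.length AB.a := by
    rw [List.eq_replicate_iff]
    refine ⟨rfl, fun x hx => ?_⟩
    cases x
    · rfl
    · exact absurd (List.count_eq_zero.mp hvs.2 hx) (fun h => h)
  rw [hv, hs] at h
  set p := v.length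
  set q := s.length
  have h' : List.replicate (n + k) AB.a ++ AB.b :: (List.replicate n AB.a ++ AB.b :: ([] : List AB))
      = List.replicate p AB.a ++ AB.b :: (List.replicate q AB.a ++ (List.replicate p AB.a ++ AB.b :: List.replicate q AB.a)) := by
    simpa [List.append_assoc] using h
  obtain ⟨hp, ht⟩ := aux_firstb _ _ _ _ h'
  rw [← List.append_assoc, ← List.replicate_add] at ht
  obtain ⟨hq, hrest⟩ := aux_firstb _ _ _ _ ht
  have : q = 0 := by simpa using (congrArg List.length hrest).symm
  omega
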